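/- For odd n, there is an isomorphism of S_n-lattices Sym²(A_{n-1}) ⊕ U_n ⊕ Z ≅ W_n ⊕ U_n ⊕ Z, where U_n is the standard rank-n permutation lattice, A_{n-1} its augmentation kernel, W_n = Z[P₂({1,...,n})] the permutation lattice on 2-subsets, and Z the trivial lattice. -/

import Mathlib

open Function

section Core
variable (G : Type) [Group G]

/-- A map is `G`-equivariant. -/
def IsEquivMapP {M N : Type} [AddCommGroup M] [AddCommGroup N]
    [DistribMulAction G M] [DistribMulAction G N] (f : M → N) : Prop :=
  ∀ (g : G) (m : M), f (g • m) = g • f m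

/-- `M` is a permutation `G`-lattice: it has a finite `ℤ`-basis permuted by `G`. -/
def IsPermLat (M : Type) [AddCommGroup M] [DistribMulAction G M] : Prop :=
  ∃ (ι : Type) (_ : Fintype ι) (b : Module.Basis ι ℤ M) (σ : G → ι → ι),
    ∀ (g : G) (i : ι), g • (b i : M) = b (σ g i)

/-- `M` is a lattice: finitely generated and free over `ℤ`. -/
def IsLat (M : Type) [AddCommGroup M] : Prop := Module.Free ℤ M ∧ Module.Finite ℤ M

/-- A short exact sequence `0 → M → E → P → 0` of `G`-modules. -/
def ShortExactG (M E P : Type) [AddCommGroup M] [AddCommGroup E] [AddCommGroup P]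
    [DistribMulAction G M] [DistribMulAction G E] [DistribMulAction G P] : Prop :=
  ∃ (i : M →+ E) (p : E →+ P), IsEquivMapP G i ∧ IsEquivMapP G p ∧
    Injective i ∧ Surjective p ∧ i.range = p.ker

/-- Colliot-Thélène–Sansuc equivalence of `G`-lattices. -/
def LatEquiv (M N : Type) [AddCommGroup M] [AddCommGroup N]
    [DistribMulAction G M] [DistribMulAction G N] : Prop :=
  ∃ (E : Type) (_ : AddCommGroup E) (_ : DistribMulAction G E)
    (P : Type) (_ : AddCommGroup P) (_ : DistribMulAction G P)
    (Q : Type) (_ : AddCommGroup Q) (_ : DistribMulAction G Q),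
    IsLat E ∧ IsPermLat G P ∧ IsPermLat G Q ∧
    ShortExactG G M E P ∧ ShortExactG G N E Q

/-- `M` is stably permutation. -/
def IsStablyPerm (M : Type) [AddCommGroup M] [DistribMulAction G M] : Prop :=
  ∃ (P : Type) (_ : AddCommGroup P) (_ : DistribMulAction G P)
    (Q : Type) (_ : AddCommGroup Q) (_ : DistribMulAction G Q),
    IsPermLat G P ∧ IsPermLat G Q ∧
    ∃ e : (M × P) ≃+ Q, IsEquivMapP G e

/-- `M` is permutation projective: a direct summand of a permutation lattice. -/
def IsPermProj (M : Type) [AddCommGroup M] [DistribMulAction G M] : Prop :=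
  ∃ (P : Type) (_ : AddCommGroup P) (_ : DistribMulAction G P), IsPermLat G P ∧
    ∃ (i : M →+ P) (r : P →+ M), IsEquivMapP G i ∧ IsEquivMapP G r ∧ ∀ m, r (i m) = m

/-- `M` is quasi-permutation: it embeds into a permutation lattice with permutation quotient. -/
def IsQuasiPerm (M : Type) [AddCommGroup M] [DistribMulAction G M] : Prop :=
  ∃ (P : Type) (_ : AddCommGroup P) (_ : DistribMulAction G P)
    (Q : Type) (_ : AddCommGroup Q) (_ : DistribMulAction G Q),
    IsPermLat G P ∧ IsPermLat G Q ∧ ShortExactG G M P Q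

variable (M : Type) [AddCommGroup M] [DistribMulAction G M]

/-- 1-cocycles. -/
def Z1 : AddSubgroup (G → M) where
  carrier := {f | ∀ g h : G, f (g * h) = g • f h + f g}
  zero_mem' := by intro g h; simp
  add_mem' := by
    intro f f' hf hf' g h
    simp only [Pi.add_apply, hf g h, hf' g h, smul_add]; abel
  neg_mem' := by
    intro f hf g h
    simp only [Pi.neg_apply, hf g h, smul_neg]; abel

/-- The coboundary homomorphism. -/
def coboundHom : M →+ Z1 G M where
  toFun m := ⟨fun g => g • m - m, by intro g h; simp only [mul_smul, smul_sub]; abel⟩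
  map_zero' := by apply Subtype.ext; funext g; simp
  map_add' := by
    intro a b; apply Subtype.ext; funext g
    show g • (a + b) - (a + b) = (g • a - a) + (g • b - b)
    simp only [smul_add]; abel

/-- 1-coboundaries. -/
def B1 : AddSubgroup (Z1 G M) := (coboundHom G M).range

/-- First group cohomology `H¹(G, M)`. -/
abbrev H1 := Z1 G M ⧸ B1 G M

/-- Restriction of cocycles to a subgroup. -/
def resZ1 (H : Subgroup G) : Z1 G M →+ Z1 H M where
  toFun f := ⟨fun h => f.1 h, by
    intro a b
    have := f.2 (a : G) (b : G)
    exact this⟩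
  map_zero' := rfl
  map_add' := fun _ _ => rfl

/-- Restriction on `H¹`. -/
def resH1 (H : Subgroup G) : H1 G M →+ H1 H M :=
  QuotientAddGroup.map _ _ (resZ1 G M H) (by
    rintro _ ⟨m, rfl⟩
    exact ⟨m, Subtype.ext rfl⟩)

/-- `Ш¹(G, M)`. -/
def Sha1 : AddSubgroup (H1 G M) :=
  ⨅ g : G, (resH1 G M (Subgroup.zpowers g)).ker

/-- `M` is coflasque: `H¹(H, M) = 0` for all subgroups `H ≤ G`. -/
def IsCoflasque : Prop := ∀ H : Subgroup G, ∀ x y : H1 H M, x = y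

end Core

section Core2
variable (G : Type) [Group G] (M : Type) [AddCommGroup M] [DistribMulAction G M]

/-- 2-cocycles. -/
def Z2 : AddSubgroup (G → G → M) where
  carrier := {f | ∀ g h k : G, g • f h k - f (g * h) k + f g (h * k) - f g h = 0}
  zero_mem' := by intro g h k; simp
  add_mem' := by
    intro f f' hf hf' g h k
    have h1 := hf g h k; have h2 := hf' g h k
    simp only [Pi.add_apply, smul_add]
    calc g • f h k + g • f' h k - (f (g * h) k + f' (g * h) k) +
          (f g (h * k) + f' g (h * k)) - (f g h + f' g h)
        = (g • f h k - f (g * h) k + f g (h * k) - f g h) +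
          (g • f' h k - f' (g * h) k + f' g (h * k) - f' g h) := by abel
      _ = 0 := by rw [h1, h2, add_zero]
  neg_mem' := by
    intro f hf g h k
    have h1 := hf g h k
    simp only [Pi.neg_apply, smul_neg]
    calc -(g • f h k) - -f (g * h) k + -f g (h * k) - -f g h
        = -(g • f h k - f (g * h) k + f g (h * k) - f g h) := by abel
      _ = 0 := by rw [h1, neg_zero]

/-- The 2-coboundary homomorphism. -/
def cobound2Hom : (G → M) →+ Z2 G M where
  toFun u := ⟨fun g h => g • u h - u (g * h) + u g, by
    intro g h k
    simp only [mul_smul, smul_sub, smul_add, mul_assoc]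
    abel⟩
  map_zero' := by apply Subtype.ext; funext g h; simp
  map_add' := by
    intro a b; apply Subtype.ext; funext g h
    show g • (a h + b h) - (a (g * h) + b (g * h)) + (a g + b g)
        = (g • a h - a (g * h) + a g) + (g • b h - b (g * h) + b g)
    simp only [smul_add]; abel

/-- 2-coboundaries. -/
def B2 : AddSubgroup (Z2 G M) := (cobound2Hom G M).range

/-- Second group cohomology `H²(G, M)`. -/
abbrev H2 := Z2 G M ⧸ B2 G M

/-- Restriction of 2-cocycles to a subgroup. -/
def resZ2 (H : Subgroup G) : Z2 G M →+ Z2 H M where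
  toFun f := ⟨fun a b => f.1 a b, by
    intro a b c
    have := f.2 (a : G) (b : G) (c : G)
    exact this⟩
  map_zero' := rfl
  map_add' := fun _ _ => rfl

/-- Restriction on `H²`. -/
def resH2 (H : Subgroup G) : H2 G M →+ H2 H M :=
  QuotientAddGroup.map _ _ (resZ2 G M H) (by
    rintro _ ⟨u, rfl⟩
    exact ⟨fun h : H => u (h : G), Subtype.ext rfl⟩)

/-- `Ш²(G, M)`. -/
def Sha2 : AddSubgroup (H2 G M) :=
  ⨅ g : G, (resH2 G M (Subgroup.zpowers g)).ker

/-- The subgroup `2M`. -/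
def twoSub : AddSubgroup M :=
  (AddMonoidHom.mk' (fun m : M => (2 : ℤ) • m) (by
    intro a b
    show (2 : ℤ) • (a + b) = (2 : ℤ) • a + (2 : ℤ) • b
    rw [smul_add])).range

/-- `M/2M`. -/
abbrev ModTwo := M ⧸ twoSub M

noncomputable instance : SMul G (ModTwo M) :=
  ⟨fun g => QuotientAddGroup.map _ _ (DistribMulAction.toAddMonoidHom M g) (by
    rintro _ ⟨m, rfl⟩
    refine ⟨g • m, ?_⟩
    show (2 : ℤ) • (g • m) = g • ((2 : ℤ) • m)
    rw [smul_comm])⟩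

theorem modTwo_smul_mk (g : G) (m : M) :
    g • (QuotientAddGroup.mk m : ModTwo M) = QuotientAddGroup.mk (g • m) := rfl

noncomputable instance : DistribMulAction G (ModTwo M) where
  one_smul x := by
    obtain ⟨m, rfl⟩ := QuotientAddGroup.mk_surjective x
    rw [modTwo_smul_mk, one_smul]
  mul_smul g h x := by
    obtain ⟨m, rfl⟩ := QuotientAddGroup.mk_surjective x
    rw [modTwo_smul_mk, modTwo_smul_mk, modTwo_smul_mk, mul_smul]
  smul_zero g := map_zero (QuotientAddGroup.map _ _ (DistribMulAction.toAddMonoidHom M g) _)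
  smul_add g x y := map_add (QuotientAddGroup.map _ _ (DistribMulAction.toAddMonoidHom M g) _) x y

variable [Finite G]

/-- Kernel of the norm map (for a finite group). -/
def normKer : AddSubgroup M where
  carrier := {x | ∑ᶠ g : G, g • x = 0}
  zero_mem' := by simp
  add_mem' := by
    intro x y hx hy
    have hx' : ∑ᶠ g : G, g • x = 0 := hx
    have hy' : ∑ᶠ g : G, g • y = 0 := hy
    show ∑ᶠ g : G, g • (x + y) = 0
    simp only [smul_add]
    rw [finsum_add_distrib (Set.toFinite _) (Set.toFinite _), hx', hy', add_zero]
  neg_mem' := by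
    intro x hx
    have hx' : ∑ᶠ g : G, g • x = 0 := hx
    show ∑ᶠ g : G, g • (-x) = 0
    simp only [smul_neg]
    rw [finsum_neg_distrib, hx', neg_zero]

/-- The subgroup generated by elements `g • m - m`. -/
def augSub : AddSubgroup M := AddSubgroup.closure {x | ∃ (g : G) (m : M), x = g • m - m}

/-- Tate cohomology `Ĥ⁻¹(G, M)` (for a finite group `G`). -/
abbrev TateNeg1 := normKer G M ⧸ ((augSub G M).addSubgroupOf (normKer G M))

/-- `M` is flasque: `Ĥ⁻¹(H, M) = 0` for all subgroups `H ≤ G`. -/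
def IsFlasque : Prop := ∀ H : Subgroup G, ∀ x y : TateNeg1 H M, x = y

end Core2

section Core3
variable (G : Type) [Group G]

/-- `M` is equivalent to a direct summand of a quasi-permutation `G`-lattice. -/
def IsEquivSummandQP (M : Type) [AddCommGroup M] [DistribMulAction G M] : Prop :=
  ∃ (S : Type) (_ : AddCommGroup S) (_ : DistribMulAction G S)
    (D : Type) (_ : AddCommGroup D) (_ : DistribMulAction G D)
    (D' : Type) (_ : AddCommGroup D') (_ : DistribMulAction G D'),
    IsLat S ∧ IsQuasiPerm G S ∧ (∃ e : (D × D') ≃+ S, IsEquivMapP G e) ∧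
    LatEquiv G M D

end Core3

section Tensor
open TensorProduct
variable (G : Type) [Group G] (M : Type) [AddCommGroup M] [DistribMulAction G M]

/-- The action of `g : G` as a `ℤ`-linear map. -/
def gLin (g : G) : M →ₗ[ℤ] M := (DistribMulAction.toAddMonoidHom M g).toIntLinearMap

noncomputable instance tensorSMul : SMul G (M ⊗[ℤ] M) :=
  ⟨fun g => TensorProduct.map (gLin G M g) (gLin G M g)⟩

theorem tsmul_def (g : G) (x : M ⊗[ℤ] M) :
    g • x = TensorProduct.map (gLin G M g) (gLin G M g) x := rfl

theorem gLin_one : gLin G M 1 = LinearMap.id := by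
  ext m; show (1 : G) • m = m; rw [one_smul]

theorem gLin_mul (g h : G) : gLin G M (g * h) = (gLin G M g).comp (gLin G M h) := by
  ext m; show (g * h) • m = g • h • m; rw [mul_smul]

noncomputable instance tensorAct : DistribMulAction G (M ⊗[ℤ] M) where
  one_smul x := by rw [tsmul_def, gLin_one, TensorProduct.map_id]; rfl
  mul_smul g h x := by
    rw [tsmul_def, tsmul_def, tsmul_def, gLin_mul, TensorProduct.map_comp]; rfl
  smul_zero g := map_zero _
  smul_add g x y := map_add _ x y

/-- Generators of the symmetric relation. -/
def symSpan : @Submodule ℤ (M ⊗[ℤ] M) _ _ TensorProduct.instModule :=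
  Submodule.span ℤ {x | ∃ a b : M, x = a ⊗ₜ[ℤ] b - b ⊗ₜ[ℤ] a}

/-- Generators of the wedge relation. -/
def wedSpan : @Submodule ℤ (M ⊗[ℤ] M) _ _ TensorProduct.instModule :=
  Submodule.span ℤ {x | ∃ a : M, x = a ⊗ₜ[ℤ] a}

/-- The second symmetric power `Sym²M`. -/
abbrev Sym2Q := (M ⊗[ℤ] M) ⧸ symSpan M

/-- The second exterior power `∧²M`. -/
abbrev Wedge2Q := (M ⊗[ℤ] M) ⧸ wedSpan M

theorem symSpan_le_comap (g : G) :
    symSpan M ≤ (symSpan M).comap (TensorProduct.map (gLin G M g) (gLin G M g)) := by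
  rw [← Submodule.map_le_iff_le_comap, symSpan, Submodule.map_span]
  refine Submodule.span_le.2 ?_
  rintro _ ⟨_, ⟨a, b, rfl⟩, rfl⟩
  refine Submodule.subset_span ?_
  exact ⟨g • a, g • b, by simp [TensorProduct.map_tmul]; rfl⟩

theorem wedSpan_le_comap (g : G) :
    wedSpan M ≤ (wedSpan M).comap (TensorProduct.map (gLin G M g) (gLin G M g)) := by
  rw [← Submodule.map_le_iff_le_comap, wedSpan, Submodule.map_span]
  refine Submodule.span_le.2 ?_
  rintro _ ⟨_, ⟨a, rfl⟩, rfl⟩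
  exact Submodule.subset_span ⟨g • a, by simp [TensorProduct.map_tmul]; rfl⟩

noncomputable instance sym2SMul : SMul G (Sym2Q M) :=
  ⟨fun g => Submodule.mapQ _ _ (TensorProduct.map (gLin G M g) (gLin G M g))
    (symSpan_le_comap G M g)⟩

noncomputable instance wedge2SMul : SMul G (Wedge2Q M) :=
  ⟨fun g => Submodule.mapQ _ _ (TensorProduct.map (gLin G M g) (gLin G M g))
    (wedSpan_le_comap G M g)⟩

theorem sym2_smul_mk (g : G) (x : M ⊗[ℤ] M) :
    g • ((symSpan M).mkQ x) = (symSpan M).mkQ (g • x) :=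
  Submodule.mapQ_apply _ _ _ _

theorem wedge2_smul_mk (g : G) (x : M ⊗[ℤ] M) :
    g • ((wedSpan M).mkQ x) = (wedSpan M).mkQ (g • x) :=
  Submodule.mapQ_apply _ _ _ _

noncomputable instance sym2Act : DistribMulAction G (Sym2Q M) where
  one_smul x := by
    obtain ⟨y, rfl⟩ := (symSpan M).mkQ_surjective x
    rw [sym2_smul_mk, one_smul]
  mul_smul g h x := by
    obtain ⟨y, rfl⟩ := (symSpan M).mkQ_surjective x
    rw [sym2_smul_mk, sym2_smul_mk, sym2_smul_mk, mul_smul]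
  smul_zero g := map_zero (Submodule.mapQ _ _ _ (symSpan_le_comap G M g))
  smul_add g x y := map_add (Submodule.mapQ _ _ _ (symSpan_le_comap G M g)) x y

noncomputable instance wedge2Act : DistribMulAction G (Wedge2Q M) where
  one_smul x := by
    obtain ⟨y, rfl⟩ := (wedSpan M).mkQ_surjective x
    rw [wedge2_smul_mk, one_smul]
  mul_smul g h x := by
    obtain ⟨y, rfl⟩ := (wedSpan M).mkQ_surjective x
    rw [wedge2_smul_mk, wedge2_smul_mk, wedge2_smul_mk, mul_smul]
  smul_zero g := map_zero (Submodule.mapQ _ _ _ (wedSpan_le_comap G M g))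
  smul_add g x y := map_add (Submodule.mapQ _ _ _ (wedSpan_le_comap G M g)) x y

variable {M} {N : Type} [AddCommGroup N]

/-- The map `Sym²f` induced by a linear map `f`. -/
noncomputable def sym2Map (f : M →ₗ[ℤ] N) : Sym2Q M →ₗ[ℤ] Sym2Q N :=
  Submodule.mapQ _ _ (TensorProduct.map f f) (by
    rw [← Submodule.map_le_iff_le_comap, symSpan, Submodule.map_span]
    refine Submodule.span_le.2 ?_
    rintro _ ⟨_, ⟨a, b, rfl⟩, rfl⟩
    exact Submodule.subset_span ⟨f a, f b, by simp [TensorProduct.map_tmul]⟩)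

/-- The map `∧²f` induced by a linear map `f`. -/
noncomputable def wedge2Map (f : M →ₗ[ℤ] N) : Wedge2Q M →ₗ[ℤ] Wedge2Q N :=
  Submodule.mapQ _ _ (TensorProduct.map f f) (by
    rw [← Submodule.map_le_iff_le_comap, wedSpan, Submodule.map_span]
    refine Submodule.span_le.2 ?_
    rintro _ ⟨_, ⟨a, rfl⟩, rfl⟩
    exact Submodule.subset_span ⟨f a, by simp [TensorProduct.map_tmul]⟩)

end Tensor

section PermMod
variable (G : Type) [Group G] (X : Type) [MulAction G X]

/-- The permutation action on `ℤ[X] = X → ℤ`. -/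
instance permSMul : SMul G (X → ℤ) := ⟨fun g f x => f (g⁻¹ • x)⟩

theorem perm_smul_def (g : G) (f : X → ℤ) (x : X) : (g • f) x = f (g⁻¹ • x) := rfl

instance permAct : DistribMulAction G (X → ℤ) where
  one_smul f := funext fun x => by rw [perm_smul_def, inv_one, one_smul]
  mul_smul g h f := funext fun x => by
    rw [perm_smul_def, perm_smul_def, perm_smul_def, mul_inv_rev, mul_smul]
  smul_zero g := rfl
  smul_add g f f' := rfl

variable [Fintype X]

/-- The augmentation kernel `A = ker(ℤ[X] → ℤ)`. -/
def augKer : AddSubgroup (X → ℤ) where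
  carrier := {f | ∑ x, f x = 0}
  zero_mem' := by simp
  add_mem' := by
    intro a b ha hb
    have ha' : ∑ x, a x = 0 := ha
    have hb' : ∑ x, b x = 0 := hb
    show ∑ x, (a x + b x) = 0
    rw [Finset.sum_add_distrib, ha', hb', add_zero]
  neg_mem' := by
    intro a ha
    have ha' : ∑ x, a x = 0 := ha
    show ∑ x, (-(a x)) = 0
    rw [Finset.sum_neg_distrib, ha', neg_zero]

theorem smul_mem_augKer (g : G) (f : X → ℤ) (hf : f ∈ augKer X) :
    g • f ∈ augKer X := by
  have hf' : ∑ x, f x = 0 := hf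
  show ∑ x, f (g⁻¹ • x) = 0
  exact (Equiv.sum_comp (MulAction.toPerm (g⁻¹ : G)) f).trans hf'

instance augKerSMul : SMul G (augKer X) :=
  ⟨fun g f => ⟨g • (f : X → ℤ), smul_mem_augKer G X g f f.2⟩⟩

theorem augKer_smul_def (g : G) (f : augKer X) :
    ((g • f : augKer X) : X → ℤ) = g • (f : X → ℤ) := rfl

instance augKerAct : DistribMulAction G (augKer X) where
  one_smul f := Subtype.ext (by rw [augKer_smul_def, one_smul])
  mul_smul g h f := Subtype.ext (by
    rw [augKer_smul_def, augKer_smul_def, augKer_smul_def, mul_smul])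
  smul_zero g := Subtype.ext (by
    rw [augKer_smul_def]
    show g • (0 : X → ℤ) = 0
    rw [smul_zero])
  smul_add g f f' := Subtype.ext (by
    show g • ((f : X → ℤ) + f') = g • (f : X → ℤ) + g • (f' : X → ℤ)
    rw [smul_add])

end PermMod

section P2sec
variable (G : Type) [Group G]

/-- The set of 2-element subsets of `X`. -/
def P2 (X : Type) [DecidableEq X] : Type := {s : Finset X // s.card = 2}

noncomputable instance (X : Type) [DecidableEq X] [Fintype X] : Fintype (P2 X) := by
  unfold P2; infer_instance

instance p2SMul (X : Type) [DecidableEq X] [MulAction G X] : SMul G (P2 X) :=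
  ⟨fun g s => ⟨s.1.image (fun x => g • x), by
    rw [Finset.card_image_of_injective _ (MulAction.injective g)]; exact s.2⟩⟩

theorem p2_smul_def (X : Type) [DecidableEq X] [MulAction G X] (g : G) (s : P2 X) :
    (g • s).1 = s.1.image (fun x => g • x) := rfl

instance p2Act (X : Type) [DecidableEq X] [MulAction G X] : MulAction G (P2 X) where
  one_smul s := Subtype.ext (by
    rw [p2_smul_def]
    simp)
  mul_smul g h s := Subtype.ext (by
    simp only [p2_smul_def, Finset.image_image]
    refine Finset.image_congr ?_
    intro x _
    exact mul_smul g h x)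

end P2sec

/-- The root lattice `A_{n-1}` as an `S_n`-lattice. -/
abbrev rootLat (n : ℕ) := augKer (Fin n)



section Aux
open Finset TensorProduct

set_option synthInstance.maxHeartbeats 1000000
set_option maxHeartbeats 3200000

noncomputable instance P2.decEq (X : Type) [DecidableEq X] : DecidableEq (P2 X) := by
  unfold P2; infer_instance

/-- indicator function -/
def chiF (n : ℕ) (a : Fin n) : Fin n → ℤ := fun i => if i = a then 1 else 0

lemma sum_chiF {n : ℕ} (s : Finset (Fin n)) (a : Fin n) :
    ∑ i ∈ s, chiF n a i = if a ∈ s then 1 else 0 :=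
  Finset.sum_ite_eq' s a (fun _ => (1:ℤ))

/-- the vector `e_a - e_b` in the root lattice -/
def fvA (n : ℕ) (a b : Fin n) : rootLat n :=
  ⟨chiF n a - chiF n b, by
    show ∑ x, (chiF n a - chiF n b) x = 0
    simp only [Pi.sub_apply, Finset.sum_sub_distrib, sum_chiF]
    simp⟩

lemma fvA_coe {n : ℕ} (a b : Fin n) (i : Fin n) :
    (fvA n a b : Fin n → ℤ) i = chiF n a i - chiF n b i := rfl

lemma fvA_self {n : ℕ} (a : Fin n) : fvA n a a = 0 := by
  apply Subtype.ext; show chiF n a - chiF n a = 0; simp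

/-- class of a pure tensor in `Sym2Q` -/
noncomputable def mkT {n : ℕ} (a b : rootLat n) : Sym2Q (rootLat n) :=
  Submodule.Quotient.mk (a ⊗ₜ[ℤ] b)

lemma mkT_comm {n : ℕ} (a b : rootLat n) : mkT a b = mkT b a := by
  rw [mkT, mkT, Submodule.Quotient.eq]
  exact Submodule.subset_span ⟨a, b, rfl⟩

/-- the `W`-component function -/
def SWf {n : ℕ} (a b : Fin n → ℤ) : P2 (Fin n) → ℤ :=
  fun q => (∑ i ∈ q.1, a i) * (∑ i ∈ q.1, b i) - ∑ i ∈ q.1, a i * b i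

lemma SWf_comm {n : ℕ} (a b : Fin n → ℤ) : SWf a b = SWf b a := by
  funext q
  simp only [SWf]
  rw [Finset.sum_congr rfl (fun i _ => mul_comm (a i) (b i))]
  ring

/-- the underlying bilinear function -/
def Sfun {n : ℕ} (a b : Fin n → ℤ) : (P2 (Fin n) → ℤ) × (Fin n → ℤ) :=
  (SWf a b, fun i => a i * b i)

lemma Sfun_comm {n : ℕ} (a b : Fin n → ℤ) : Sfun a b = Sfun b a := by
  refine Prod.ext (SWf_comm a b) (funext fun i => mul_comm _ _)

lemma Sfun_add_left {n : ℕ} (a a' b : Fin n → ℤ) :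
    Sfun (a + a') b = Sfun a b + Sfun a' b := by
  refine Prod.ext (funext fun q => ?_) (funext fun i => ?_)
  · show SWf (a + a') b q = SWf a b q + SWf a' b q
    simp only [SWf, Pi.add_apply, add_mul, Finset.sum_add_distrib]
    ring
  · show (a i + a' i) * b i = a i * b i + a' i * b i
    ring

lemma Sfun_smul_left {n : ℕ} (c : ℤ) (a b : Fin n → ℤ) :
    Sfun (c • a) b = c • Sfun a b := by
  refine Prod.ext (funext fun q => ?_) (funext fun i => ?_)
  · show SWf (c • a) b q = c * SWf a b q
    simp only [SWf, Pi.smul_apply, smul_eq_mul, mul_assoc, ← Finset.mul_sum]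
    ring
  · show (c * a i) * b i = c * (a i * b i)
    ring

/-- the symmetrization bilinear map -/
def Sbil (n : ℕ) : rootLat n →ₗ[ℤ] rootLat n →ₗ[ℤ] ((P2 (Fin n) → ℤ) × (Fin n → ℤ)) :=
  LinearMap.mk₂ ℤ
    (fun a b => Sfun (a : Fin n → ℤ) (b : Fin n → ℤ))
    (fun a a' b => Sfun_add_left _ _ _)
    (fun c a b => Sfun_smul_left _ _ _)
    (fun a b b' => by
      show Sfun _ ((b : Fin n → ℤ) + (b' : Fin n → ℤ)) = _
      rw [Sfun_comm, Sfun_add_left, Sfun_comm (b : Fin n → ℤ), Sfun_comm (b' : Fin n → ℤ)])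
    (fun c a b => by
      show Sfun _ (c • (b : Fin n → ℤ)) = _
      rw [Sfun_comm, Sfun_smul_left, Sfun_comm])

/-- the symmetrization map on `Sym2Q` -/
noncomputable def SqL (n : ℕ) :
    Sym2Q (rootLat n) →ₗ[ℤ] ((P2 (Fin n) → ℤ) × (Fin n → ℤ)) :=
  Submodule.liftQ (symSpan (rootLat n)) (TensorProduct.lift (Sbil n)) (by
    rw [symSpan, Submodule.span_le]
    rintro _ ⟨a, b, rfl⟩
    simp only [SetLike.mem_coe, LinearMap.mem_ker, map_sub, TensorProduct.lift.tmul]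
    refine sub_eq_zero.2 ?_
    show Sfun (a : Fin n → ℤ) (b : Fin n → ℤ) = Sfun (b : Fin n → ℤ) (a : Fin n → ℤ)
    exact Sfun_comm _ _)

lemma SqL_mkT {n : ℕ} (a b : rootLat n) :
    SqL n (mkT a b) = Sfun (a : Fin n → ℤ) (b : Fin n → ℤ) := by
  rfl

/-- the map `Φ` -/
noncomputable def PhiL (n m : ℕ) :
    (Sym2Q (rootLat n) × (Fin n → ℤ) × ℤ) →ₗ[ℤ] ((P2 (Fin n) → ℤ) × (Fin n → ℤ) × ℤ) where
  toFun x := (fun q => (SqL n x.1).1 q + ∑ i ∈ q.1, x.2.1 i,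
              fun i => (SqL n x.1).2 i + (1 - (m : ℤ)) * x.2.1 i + x.2.2,
              (∑ i, x.2.1 i) + 2 * x.2.2)
  map_add' x y := by
    refine Prod.ext (funext fun q => ?_) (Prod.ext (funext fun i => ?_) ?_)
    · show (SqL n (x.1 + y.1)).1 q + ∑ i ∈ q.1, (x.2.1 i + y.2.1 i) = _
      simp only [map_add, Prod.fst_add, Pi.add_apply, Finset.sum_add_distrib]
      show _ = ((SqL n x.1).1 q + ∑ i ∈ q.1, x.2.1 i) + ((SqL n y.1).1 q + ∑ i ∈ q.1, y.2.1 i)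
      ring
    · show (SqL n (x.1 + y.1)).2 i + (1 - (m : ℤ)) * (x.2.1 i + y.2.1 i) + (x.2.2 + y.2.2) = _
      simp only [map_add, Prod.snd_add, Pi.add_apply]
      show _ = ((SqL n x.1).2 i + (1 - (m : ℤ)) * x.2.1 i + x.2.2)
        + ((SqL n y.1).2 i + (1 - (m : ℤ)) * y.2.1 i + y.2.2)
      ring
    · show (∑ i, (x.2.1 i + y.2.1 i)) + 2 * (x.2.2 + y.2.2) = _
      simp only [Finset.sum_add_distrib]
      show _ = ((∑ i, x.2.1 i) + 2 * x.2.2) + ((∑ i, y.2.1 i) + 2 * y.2.2)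
      ring
  map_smul' c x := by
    refine Prod.ext (funext fun q => ?_) (Prod.ext (funext fun i => ?_) ?_)
    · show (SqL n (c • x.1)).1 q + ∑ i ∈ q.1, c * x.2.1 i = _
      simp only [map_smul, Prod.smul_fst, Pi.smul_apply, smul_eq_mul, ← Finset.mul_sum]
      show _ = c * ((SqL n x.1).1 q + ∑ i ∈ q.1, x.2.1 i)
      ring
    · show (SqL n (c • x.1)).2 i + (1 - (m : ℤ)) * (c * x.2.1 i) + c * x.2.2 = _
      simp only [map_smul, Prod.smul_snd, Pi.smul_apply, smul_eq_mul]
      show _ = c * ((SqL n x.1).2 i + (1 - (m : ℤ)) * x.2.1 i + x.2.2)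
      ring
    · show (∑ i, c * x.2.1 i) + 2 * (c * x.2.2) = _
      simp only [← Finset.mul_sum]
      show _ = c * ((∑ i, x.2.1 i) + 2 * x.2.2)
      ring


lemma PhiL_apply (n m : ℕ) (s : Sym2Q (rootLat n)) (u : Fin n → ℤ) (z : ℤ) :
    PhiL n m (s, u, z) = (fun q => (SqL n s).1 q + ∑ i ∈ q.1, u i,
      fun i => (SqL n s).2 i + (1 - (m : ℤ)) * u i + z,
      (∑ i, u i) + 2 * z) := rfl

lemma fvA_mul_fvA {n : ℕ} {k a b : Fin n} (hka : k ≠ a) (hkb : k ≠ b) (hab : a ≠ b) (i : Fin n) :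
    (fvA n k a : Fin n → ℤ) i * (fvA n k b : Fin n → ℤ) i = chiF n k i := by
  simp only [fvA_coe, chiF]
  split_ifs <;> simp_all <;> ring

lemma fvA_mul_self {n : ℕ} {a b : Fin n} (hab : a ≠ b) (i : Fin n) :
    (fvA n a b : Fin n → ℤ) i * (fvA n a b : Fin n → ℤ) i = chiF n a i + chiF n b i := by
  simp only [fvA_coe, chiF]
  split_ifs <;> simp_all <;> ring

lemma sum_ind {n : ℕ} (s : Finset (Fin n)) (a b : Fin n) (hab : a ≠ b) :
    ∑ k ∈ Finset.univ \ {a, b}, (if k ∈ s then (1:ℤ) else 0)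
      = (s.card : ℤ) - (if a ∈ s then 1 else 0) - (if b ∈ s then 1 else 0) := by
  have h2 : ∑ k : Fin n, (if k ∈ s then (1:ℤ) else 0) = (s.card : ℤ) := by
    rw [Finset.sum_ite_mem, Finset.univ_inter, Finset.sum_const, nsmul_eq_mul, mul_one]
  have h3 := Finset.sum_sdiff (f := fun k => if k ∈ s then (1:ℤ) else 0)
    (Finset.subset_univ ({a, b} : Finset (Fin n)))
  rw [Finset.sum_pair hab, h2] at h3
  linarith

lemma sum_ind_erase {n : ℕ} (s : Finset (Fin n)) (a : Fin n) :
    ∑ k ∈ Finset.univ.erase a, (if k ∈ s then (1:ℤ) else 0)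
      = (s.card : ℤ) - (if a ∈ s then 1 else 0) := by
  have h2 : ∑ k : Fin n, (if k ∈ s then (1:ℤ) else 0) = (s.card : ℤ) := by
    rw [Finset.sum_ite_mem, Finset.univ_inter, Finset.sum_const, nsmul_eq_mul, mul_one]
  have h3 := Finset.add_sum_erase Finset.univ (fun k => if k ∈ s then (1:ℤ) else 0)
    (Finset.mem_univ a)
  rw [h2] at h3
  linarith

lemma sum_fvA {n : ℕ} (s : Finset (Fin n)) (a b : Fin n) :
    ∑ i ∈ s, (fvA n a b : Fin n → ℤ) i
      = (if a ∈ s then (1:ℤ) else 0) - (if b ∈ s then 1 else 0) := by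
  simp only [fvA_coe, Finset.sum_sub_distrib, sum_chiF]

lemma SWf_fv_fv {n : ℕ} {k a b : Fin n} (hka : k ≠ a) (hkb : k ≠ b) (hab : a ≠ b) (q : P2 (Fin n)) :
    SWf (fvA n k a : Fin n → ℤ) (fvA n k b : Fin n → ℤ) q
      = ((if k ∈ q.1 then (1:ℤ) else 0) - (if a ∈ q.1 then 1 else 0))
        * ((if k ∈ q.1 then 1 else 0) - (if b ∈ q.1 then 1 else 0))
        - (if k ∈ q.1 then 1 else 0) := by
  have hp : ∑ i ∈ q.1, (fvA n k a : Fin n → ℤ) i * (fvA n k b : Fin n → ℤ) i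
      = if k ∈ q.1 then 1 else 0 := by
    rw [Finset.sum_congr rfl (fun i _ => fvA_mul_fvA hka hkb hab i), sum_chiF]
  rw [SWf, hp, sum_fvA, sum_fvA]

lemma SWf_fv_self {n : ℕ} {a b : Fin n} (hab : a ≠ b) (q : P2 (Fin n)) :
    SWf (fvA n a b : Fin n → ℤ) (fvA n a b : Fin n → ℤ) q
      = ((if a ∈ q.1 then (1:ℤ) else 0) - (if b ∈ q.1 then 1 else 0)) ^ 2
        - ((if a ∈ q.1 then 1 else 0) + (if b ∈ q.1 then 1 else 0)) := by
  have hp : ∑ i ∈ q.1, (fvA n a b : Fin n → ℤ) i * (fvA n a b : Fin n → ℤ) i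
      = (if a ∈ q.1 then (1:ℤ) else 0) + (if b ∈ q.1 then 1 else 0) := by
    rw [Finset.sum_congr rfl (fun i _ => fvA_mul_self hab i)]
    simp only [Finset.sum_add_distrib, sum_chiF]
  rw [SWf, hp, sum_fvA]
  ring

lemma C1 {n m : ℕ} (hm : n = 2 * m + 1) (q0 : P2 (Fin n)) :
    ∃ x, PhiL n m x = ((fun q => if q = q0 then 1 else 0), 0, 0) := by
  obtain ⟨a, b, hab, hq0⟩ := Finset.card_eq_two.1 q0.2
  have hnZ : (n : ℤ) = 2 * m + 1 := by exact_mod_cast congrArg (Nat.cast (R := ℤ)) hm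
  refine ⟨((∑ k ∈ Finset.univ \ {a, b}, mkT (fvA n k a) (fvA n k b))
      + (m : ℤ) • mkT (fvA n a b) (fvA n a b), chiF n a + chiF n b, -1), ?_⟩
  rw [PhiL_apply]
  have hs : SqL n ((∑ k ∈ Finset.univ \ {a, b}, mkT (fvA n k a) (fvA n k b))
      + (m : ℤ) • mkT (fvA n a b) (fvA n a b))
      = (∑ k ∈ Finset.univ \ {a, b},
          Sfun (fvA n k a : Fin n → ℤ) (fvA n k b : Fin n → ℤ))
        + (m : ℤ) • Sfun (fvA n a b : Fin n → ℤ) (fvA n a b : Fin n → ℤ) := by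
    rw [map_add, map_sum, map_smul]
    simp only [SqL_mkT]
  refine Prod.ext (funext fun q => ?_) (Prod.ext (funext fun i => ?_) ?_)
  · -- W component
    show (SqL n _).1 q + ∑ i ∈ q.1, (chiF n a + chiF n b) i = if q = q0 then 1 else 0
    rw [hs]
    have hcard : ((Finset.univ \ ({a, b} : Finset (Fin n))).card : ℤ) = (n : ℤ) - 2 := by
      rw [Finset.card_sdiff_of_subset (Finset.subset_univ _), Finset.card_univ, Fintype.card_fin,
        Finset.card_pair hab]
      omega
    set A : ℤ := if a ∈ q.1 then 1 else 0 with hA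
    set B : ℤ := if b ∈ q.1 then 1 else 0 with hB
    have hApply : ((∑ k ∈ Finset.univ \ {a, b},
        Sfun (fvA n k a : Fin n → ℤ) (fvA n k b : Fin n → ℤ))
        + (m : ℤ) • Sfun (fvA n a b : Fin n → ℤ) (fvA n a b : Fin n → ℤ)).1 q
        = (∑ k ∈ Finset.univ \ {a, b},
            SWf (fvA n k a : Fin n → ℤ) (fvA n k b : Fin n → ℤ) q)
          + (m : ℤ) * SWf (fvA n a b : Fin n → ℤ) (fvA n a b : Fin n → ℤ) q := by
      simp only [Prod.fst_add, Prod.smul_fst, Prod.fst_sum, Finset.sum_apply, Pi.add_apply,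
        Pi.smul_apply, smul_eq_mul, Sfun]
    rw [hApply]
    have hsum1 : ∑ k ∈ Finset.univ \ {a, b},
        SWf (fvA n k a : Fin n → ℤ) (fvA n k b : Fin n → ℤ) q
        = ((n : ℤ) - 2) * (A * B) - (A + B) * (2 - A - B) := by
      have step : ∀ k ∈ Finset.univ \ ({a, b} : Finset (Fin n)),
          SWf (fvA n k a : Fin n → ℤ) (fvA n k b : Fin n → ℤ) q
          = A * B - (if k ∈ q.1 then (1:ℤ) else 0) * (A + B) := by
        intro k hk
        simp only [Finset.mem_sdiff, Finset.mem_insert, Finset.mem_singleton, not_or] at hk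
        rw [SWf_fv_fv hk.2.1 hk.2.2 hab q, ← hA, ← hB]
        by_cases hkq : k ∈ q.1 <;> simp [hkq] <;> ring
      rw [Finset.sum_congr rfl step, Finset.sum_sub_distrib, Finset.sum_const, nsmul_eq_mul,
        ← Finset.sum_mul, sum_ind q.1 a b hab, q.2, hcard, ← hA, ← hB]
      push_cast
      ring
    rw [hsum1, SWf_fv_self hab q, ← hA, ← hB]
    have hfw : ∑ i ∈ q.1, (chiF n a + chiF n b) i = A + B := by
      simp only [Pi.add_apply, Finset.sum_add_distrib, sum_chiF, ← hA, ← hB]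
    rw [hfw]
    have htar : (if q = q0 then (1:ℤ) else 0) = A * B := by
      by_cases hq : q = q0
      · subst hq
        have ha' : a ∈ q.1 := by rw [hq0]; simp
        have hb' : b ∈ q.1 := by rw [hq0]; simp
        simp [hA, hB, ha', hb']
      · have : ¬(a ∈ q.1 ∧ b ∈ q.1) := by
          rintro ⟨ha', hb'⟩
          exact hq (Subtype.ext (Finset.eq_of_subset_of_card_le
            (by rw [hq0]; intro x hx; simp only [Finset.mem_insert, Finset.mem_singleton] at hx
                rcases hx with rfl | rfl; exact ha'; exact hb')
            (by rw [q.2, q0.2])).symm)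
        rcases not_and_or.1 this with h | h <;> simp [hA, hB, h, hq]
    rw [htar]
    by_cases ha' : a ∈ q.1 <;> by_cases hb' : b ∈ q.1 <;>
      simp only [hA, hB, ha', hb', if_true, if_false] <;> ring_nf <;> omega
  · -- U component
    show (SqL n _).2 i + (1 - (m : ℤ)) * (chiF n a + chiF n b) i + (-1)
        = (0 : (Fin n → ℤ)) i
    rw [hs]
    have hApply : ((∑ k ∈ Finset.univ \ {a, b},
        Sfun (fvA n k a : Fin n → ℤ) (fvA n k b : Fin n → ℤ))
        + (m : ℤ) • Sfun (fvA n a b : Fin n → ℤ) (fvA n a b : Fin n → ℤ)).2 i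
        = (∑ k ∈ Finset.univ \ {a, b},
            (fvA n k a : Fin n → ℤ) i * (fvA n k b : Fin n → ℤ) i)
          + (m : ℤ) * ((fvA n a b : Fin n → ℤ) i * (fvA n a b : Fin n → ℤ) i) := by
      simp only [Prod.snd_add, Prod.smul_snd, Prod.snd_sum, Finset.sum_apply, Pi.add_apply,
        Pi.smul_apply, smul_eq_mul, Sfun]
    rw [hApply]
    have hsum : ∑ k ∈ Finset.univ \ ({a, b} : Finset (Fin n)),
        (fvA n k a : Fin n → ℤ) i * (fvA n k b : Fin n → ℤ) i
        = (if i = a then (0:ℤ) else if i = b then 0 else 1) := by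
      have step : ∀ k ∈ Finset.univ \ ({a, b} : Finset (Fin n)),
          (fvA n k a : Fin n → ℤ) i * (fvA n k b : Fin n → ℤ) i = chiF n k i := by
        intro k hk
        simp only [Finset.mem_sdiff, Finset.mem_insert, Finset.mem_singleton, not_or] at hk
        exact fvA_mul_fvA hk.2.1 hk.2.2 hab i
      rw [Finset.sum_congr rfl step]
      simp only [chiF]
      rw [Finset.sum_ite_eq]
      by_cases hia : i = a
      · simp [hia, hab]
      · by_cases hib : i = b <;> simp [hia, hib]
    rw [hsum, fvA_mul_self hab i]
    simp only [chiF, Pi.add_apply, Pi.zero_apply]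
    rcases eq_or_ne i a with rfl | hia
    · simp [hab]
    · rcases eq_or_ne i b with rfl | hib
      · simp [hia]
      · simp [hia, hib]
  · -- Z component
    show (∑ i, (chiF n a + chiF n b) i) + 2 * (-1) = 0
    simp only [Pi.add_apply, Finset.sum_add_distrib, sum_chiF, Finset.mem_univ, if_true]
    ring


lemma C2 {n m : ℕ} (hm : n = 2 * m + 1) (a : Fin n) :
    ∃ x, PhiL n m x = (0, chiF n a, 0) := by
  have hnZ : (n : ℤ) = 2 * m + 1 := by exact_mod_cast congrArg (Nat.cast (R := ℤ)) hm
  refine ⟨(∑ k ∈ Finset.univ.erase a, mkT (fvA n a k) (fvA n a k),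
    (2 : ℤ) • chiF n a, -1), ?_⟩
  rw [PhiL_apply]
  have hs : SqL n (∑ k ∈ Finset.univ.erase a, mkT (fvA n a k) (fvA n a k))
      = ∑ k ∈ Finset.univ.erase a,
          Sfun (fvA n a k : Fin n → ℤ) (fvA n a k : Fin n → ℤ) := by
    rw [map_sum]
    simp only [SqL_mkT]
  have hcard : ((Finset.univ.erase a).card : ℤ) = (n : ℤ) - 1 := by
    rw [Finset.card_erase_of_mem (Finset.mem_univ a), Finset.card_univ, Fintype.card_fin]
    omega
  refine Prod.ext (funext fun q => ?_) (Prod.ext (funext fun i => ?_) ?_)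
  · -- W component
    show (SqL n _).1 q + ∑ i ∈ q.1, ((2:ℤ) • chiF n a) i = (0 : P2 (Fin n) → ℤ) q
    rw [hs]
    set A : ℤ := if a ∈ q.1 then 1 else 0 with hA
    have hApply : (∑ k ∈ Finset.univ.erase a,
        Sfun (fvA n a k : Fin n → ℤ) (fvA n a k : Fin n → ℤ)).1 q
        = ∑ k ∈ Finset.univ.erase a,
            SWf (fvA n a k : Fin n → ℤ) (fvA n a k : Fin n → ℤ) q := by
      simp only [Prod.fst_sum, Finset.sum_apply, Sfun]
    rw [hApply]
    have hsum1 : ∑ k ∈ Finset.univ.erase a,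
        SWf (fvA n a k : Fin n → ℤ) (fvA n a k : Fin n → ℤ) q
        = -2 * A * (2 - A) := by
      have step : ∀ k ∈ Finset.univ.erase a,
          SWf (fvA n a k : Fin n → ℤ) (fvA n a k : Fin n → ℤ) q
          = -2 * A * (if k ∈ q.1 then (1:ℤ) else 0) := by
        intro k hk
        have hak : a ≠ k := (Finset.ne_of_mem_erase hk).symm
        rw [SWf_fv_self hak q, ← hA]
        by_cases hkq : k ∈ q.1 <;> by_cases haq : a ∈ q.1 <;>
          simp [hkq, haq, hA] <;> ring
      rw [Finset.sum_congr rfl step, ← Finset.mul_sum, sum_ind_erase q.1 a, q.2, ← hA]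
      ring
    rw [hsum1]
    have hfw : ∑ i ∈ q.1, ((2:ℤ) • chiF n a) i = 2 * A := by
      simp only [Pi.smul_apply, smul_eq_mul, ← Finset.mul_sum, sum_chiF, ← hA]
    rw [hfw]
    show -2 * A * (2 - A) + 2 * A = 0
    rcases hA with _
    by_cases haq : a ∈ q.1 <;> simp only [hA, haq, if_true, if_false] <;> ring
  · -- U component
    show (SqL n _).2 i + (1 - (m : ℤ)) * ((2:ℤ) • chiF n a) i + (-1) = chiF n a i
    rw [hs]
    have hApply : (∑ k ∈ Finset.univ.erase a,
        Sfun (fvA n a k : Fin n → ℤ) (fvA n a k : Fin n → ℤ)).2 i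
        = ∑ k ∈ Finset.univ.erase a,
            (fvA n a k : Fin n → ℤ) i * (fvA n a k : Fin n → ℤ) i := by
      simp only [Prod.snd_sum, Finset.sum_apply, Sfun]
    rw [hApply]
    have hsum : ∑ k ∈ Finset.univ.erase a,
        (fvA n a k : Fin n → ℤ) i * (fvA n a k : Fin n → ℤ) i
        = ((n:ℤ) - 1) * chiF n a i + (if i ∈ Finset.univ.erase a then (1:ℤ) else 0) := by
      have step : ∀ k ∈ Finset.univ.erase a,
          (fvA n a k : Fin n → ℤ) i * (fvA n a k : Fin n → ℤ) i
          = chiF n a i + chiF n k i := by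
        intro k hk
        exact fvA_mul_self (Finset.ne_of_mem_erase hk).symm i
      rw [Finset.sum_congr rfl step, Finset.sum_add_distrib, Finset.sum_const, nsmul_eq_mul,
        hcard]
      congr 1
      simp only [chiF]
      exact Finset.sum_ite_eq _ i (fun _ => (1:ℤ))
    rw [hsum]
    simp only [Pi.smul_apply, smul_eq_mul, chiF, Finset.mem_erase, Finset.mem_univ, and_true]
    rcases eq_or_ne i a with rfl | hia
    · simp only [if_pos rfl, not_true, if_neg (not_not_intro rfl), if_false]
      try simp
      try linarith
    · simp [hia]
  · -- Z component
    show (∑ i, ((2:ℤ) • chiF n a) i) + 2 * (-1) = 0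
    simp only [Pi.smul_apply, smul_eq_mul, ← Finset.mul_sum, sum_chiF, Finset.mem_univ, if_true]
    ring

lemma Phi_surj {n m : ℕ} (hm : n = 2 * m + 1) :
    Function.Surjective (PhiL n m) := by
  have hnZ : (n : ℤ) = 2 * m + 1 := by exact_mod_cast congrArg (Nat.cast (R := ℤ)) hm
  set R := LinearMap.range (PhiL n m) with hR
  have hW : ∀ w : P2 (Fin n) → ℤ, (w, (0 : Fin n → ℤ), (0:ℤ)) ∈ R := by
    intro w
    have : (w, (0 : Fin n → ℤ), (0:ℤ))
        = ∑ q : P2 (Fin n), w q • ((fun q' => if q' = q then (1:ℤ) else 0), (0 : Fin n → ℤ), (0:ℤ)) := by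
      refine Prod.ext ?_ (Prod.ext ?_ ?_)
      · rw [Prod.fst_sum]
        simp only [Prod.smul_fst]
        funext q'
        rw [Finset.sum_apply]
        simp only [Pi.smul_apply, smul_eq_mul, mul_ite, mul_one, mul_zero]
        rw [Finset.sum_ite_eq Finset.univ q' w]
        simp
      · rw [Prod.snd_sum, Prod.fst_sum]
        simp only [Prod.smul_snd, Prod.smul_fst, smul_zero]
        simp
      · rw [Prod.snd_sum, Prod.snd_sum]
        simp only [Prod.smul_snd, smul_zero]
        simp
    rw [this]
    refine Submodule.sum_mem R (fun q _ => Submodule.smul_mem R _ ?_)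
    obtain ⟨x, hx⟩ := C1 hm q
    exact ⟨x, hx⟩
  have hU : ∀ v : Fin n → ℤ, ((0 : P2 (Fin n) → ℤ), v, (0:ℤ)) ∈ R := by
    intro v
    have : ((0 : P2 (Fin n) → ℤ), v, (0:ℤ))
        = ∑ a : Fin n, v a • ((0 : P2 (Fin n) → ℤ), chiF n a, (0:ℤ)) := by
      refine Prod.ext ?_ (Prod.ext ?_ ?_)
      · rw [Prod.fst_sum]; simp
      · rw [Prod.snd_sum, Prod.fst_sum]
        simp only [Prod.smul_snd, Prod.smul_fst, smul_zero]
        funext j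
        rw [Finset.sum_apply]
        simp only [Pi.smul_apply, smul_eq_mul, chiF, mul_ite, mul_one, mul_zero]
        rw [Finset.sum_ite_eq Finset.univ j v]
        simp
      · rw [Prod.snd_sum, Prod.snd_sum]; simp
    rw [this]
    refine Submodule.sum_mem R (fun a _ => Submodule.smul_mem R _ ?_)
    obtain ⟨x, hx⟩ := C2 hm a
    exact ⟨x, hx⟩
  set a0 : Fin n := ⟨0, by omega⟩ with ha0
  have hZ1 : ((0 : P2 (Fin n) → ℤ), (0 : Fin n → ℤ), (1:ℤ)) ∈ R := by
    have h1 : PhiL n m (0, chiF n a0, 0)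
        = ((fun q => ∑ i ∈ q.1, chiF n a0 i),
           fun i => (1 - (m:ℤ)) * chiF n a0 i, 1) := by
      rw [PhiL_apply]
      refine Prod.ext (funext fun q => ?_) (Prod.ext (funext fun i => ?_) ?_)
      · simp [map_zero]
      · simp [map_zero]
      · simp [sum_chiF]
    have h2 : ((0 : P2 (Fin n) → ℤ), (0 : Fin n → ℤ), (1:ℤ))
        = PhiL n m (0, chiF n a0, 0)
          - ((fun q => ∑ i ∈ q.1, chiF n a0 i), (0 : Fin n → ℤ), (0:ℤ))
          - ((0 : P2 (Fin n) → ℤ), fun i => (1 - (m:ℤ)) * chiF n a0 i, (0:ℤ)) := by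
      rw [h1]
      refine Prod.ext ?_ (Prod.ext ?_ ?_) <;> simp
    rw [h2]
    refine Submodule.sub_mem R (Submodule.sub_mem R ⟨_, rfl⟩ (hW _)) (hU _)
  intro y
  obtain ⟨w, v, z⟩ := y
  have : (w, v, z) = (w, (0:Fin n → ℤ), (0:ℤ)) + ((0 : P2 (Fin n) → ℤ), v, (0:ℤ))
      + z • ((0 : P2 (Fin n) → ℤ), (0:Fin n → ℤ), (1:ℤ)) := by
    refine Prod.ext ?_ (Prod.ext ?_ ?_) <;> simp
  have hmem : (w, v, z) ∈ R := by
    rw [this]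
    exact Submodule.add_mem R (Submodule.add_mem R (hW w) (hU v)) (Submodule.smul_mem R z hZ1)
  exact hmem


lemma root_expand {n : ℕ} (t : Fin n) (a : rootLat n) :
    a = ∑ i, ((a : Fin n → ℤ) i) • fvA n i t := by
  apply Subtype.ext
  have hsum : (a : Fin n → ℤ) ∈ augKer (Fin n) := a.2
  have hsum' : ∑ x, (a : Fin n → ℤ) x = 0 := hsum
  funext j
  rw [AddSubmonoidClass.coe_finset_sum, Finset.sum_apply]
  have hterm : ∀ i, (((a : Fin n → ℤ) i • fvA n i t : rootLat n) : Fin n → ℤ) j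
      = (a : Fin n → ℤ) i * (chiF n i j - chiF n t j) := fun i => rfl
  rw [Finset.sum_congr rfl (fun i _ => hterm i)]
  simp only [mul_sub, Finset.sum_sub_distrib, ← Finset.sum_mul]
  rw [hsum', zero_mul, sub_zero]
  simp only [chiF, mul_ite, mul_one, mul_zero]
  rw [Finset.sum_ite_eq Finset.univ j]
  simp

lemma mkT_expand {n : ℕ} (t : Fin n) (a b : rootLat n) :
    mkT a b = ∑ p : Fin n × Fin n,
      ((a : Fin n → ℤ) p.1 * (b : Fin n → ℤ) p.2) • mkT (fvA n p.1 t) (fvA n p.2 t) := by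
  have h1 : (a ⊗ₜ[ℤ] b : rootLat n ⊗[ℤ] rootLat n)
      = ∑ p : Fin n × Fin n, ((a : Fin n → ℤ) p.1 * (b : Fin n → ℤ) p.2)
          • (fvA n p.1 t ⊗ₜ[ℤ] fvA n p.2 t) := by
    conv_lhs => rw [root_expand t a, root_expand t b]
    rw [TensorProduct.sum_tmul]
    rw [Finset.sum_congr rfl (fun i _ => TensorProduct.tmul_sum _ _ _)]
    conv_rhs => rw [Fintype.sum_prod_type]
    refine Finset.sum_congr rfl (fun i _ => Finset.sum_congr rfl (fun j _ => ?_))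
    rw [TensorProduct.tmul_smul, TensorProduct.smul_tmul', smul_smul,
      mul_comm ((b : Fin n → ℤ) j) ((a : Fin n → ℤ) i)]
    exact TensorProduct.smul_tmul' _ _ _
  show (symSpan (rootLat n)).mkQ (a ⊗ₜ[ℤ] b) = _
  rw [h1, map_sum]
  refine Finset.sum_congr rfl (fun p _ => ?_)
  rw [map_smul]
  rfl

lemma mkT_zero_left {n : ℕ} (b : rootLat n) : mkT 0 b = 0 := by
  rw [mkT, TensorProduct.zero_tmul]
  rfl

lemma mkT_zero_right {n : ℕ} (a : rootLat n) : mkT a 0 = 0 := by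
  rw [mkT, TensorProduct.tmul_zero]
  rfl

lemma sym2_span {n : ℕ} (t : Fin n) (s : Sym2Q (rootLat n)) :
    ∃ c : Fin n × Fin n → ℤ,
      ∑ p : Fin n × Fin n, c p • mkT (fvA n p.1 t) (fvA n p.2 t) = s := by
  have key : ∀ y : (rootLat n) ⊗[ℤ] (rootLat n),
      (symSpan (rootLat n)).mkQ y ∈ Submodule.span ℤ
        (Set.range fun p : Fin n × Fin n => mkT (fvA n p.1 t) (fvA n p.2 t)) := by
    intro y
    induction y using TensorProduct.induction_on with
    | zero => rw [map_zero]; exact Submodule.zero_mem _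
    | tmul a b =>
        rw [show (symSpan (rootLat n)).mkQ (a ⊗ₜ[ℤ] b) = mkT a b from rfl,
          mkT_expand t a b]
        refine Submodule.sum_mem _ fun p _ => ?_
        refine Submodule.smul_mem _ _ ?_
        exact Submodule.subset_span (Set.mem_range_self p)
    | add x y hx hy => rw [map_add]; exact Submodule.add_mem _ hx hy
  obtain ⟨y, rfl⟩ := (symSpan (rootLat n)).mkQ_surjective s
  exact (Submodule.mem_span_range_iff_exists_fun ℤ).1 (key y)

/-- half of the `μ`-map on `W` -/
noncomputable def muW (n : ℕ) : (P2 (Fin n) → ℤ) →ₗ[ℤ] (Fin n → ℤ) where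
  toFun w := fun i => ∑ j, if h : i = j then 0 else w ⟨{i, j}, Finset.card_pair h⟩
  map_add' w w' := by
    funext i
    rw [Pi.add_apply, ← Finset.sum_add_distrib]
    refine Finset.sum_congr rfl (fun j _ => ?_)
    by_cases h : i = j <;> simp [h] <;> rfl
  map_smul' c w := by
    funext i
    show (∑ j, if h : i = j then 0 else (c • w) ⟨{i, j}, Finset.card_pair h⟩)
        = c • (∑ j, if h : i = j then 0 else w ⟨{i, j}, Finset.card_pair h⟩)
    rw [smul_eq_mul, Finset.mul_sum]
    refine Finset.sum_congr rfl (fun j _ => ?_)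
    by_cases h : i = j
    · rw [dif_pos h, dif_pos h, mul_zero]
    · rw [dif_neg h, dif_neg h]
      rfl

lemma mu_rel {n : ℕ} (s : Sym2Q (rootLat n)) :
    muW n ((SqL n s).1) + (2 : ℤ) • (SqL n s).2 = 0 := by
  have key : (muW n).comp ((LinearMap.fst ℤ (P2 (Fin n) → ℤ) (Fin n → ℤ)).comp (SqL n))
      + (2 : ℤ) • ((LinearMap.snd ℤ (P2 (Fin n) → ℤ) (Fin n → ℤ)).comp (SqL n))
      = 0 := by
    apply Submodule.linearMap_qext
    apply TensorProduct.ext'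
    intro a b
    have ha : ∑ x, (a : Fin n → ℤ) x = 0 := a.2
    have hb : ∑ x, (b : Fin n → ℤ) x = 0 := b.2
    show muW n ((SqL n (mkT a b)).1) + (2 : ℤ) • (SqL n (mkT a b)).2 = 0
    rw [SqL_mkT]
    funext i
    show (∑ j, if h : i = j then 0
        else SWf (a : Fin n → ℤ) (b : Fin n → ℤ) ⟨{i, j}, Finset.card_pair h⟩)
      + 2 * ((a : Fin n → ℤ) i * (b : Fin n → ℤ) i) = 0
    have step : ∀ j, (if h : i = j then 0
        else SWf (a : Fin n → ℤ) (b : Fin n → ℤ) ⟨{i, j}, Finset.card_pair h⟩)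
        = ((a : Fin n → ℤ) i * (b : Fin n → ℤ) j + (a : Fin n → ℤ) j * (b : Fin n → ℤ) i)
          - (if i = j then 2 * ((a : Fin n → ℤ) i * (b : Fin n → ℤ) i) else 0) := by
      intro j
      by_cases h : i = j
      · subst h
        simp
        ring
      · rw [dif_neg h, if_neg h]
        show (∑ k ∈ ({i, j} : Finset (Fin n)), (a : Fin n → ℤ) k)
            * (∑ k ∈ ({i, j} : Finset (Fin n)), (b : Fin n → ℤ) k)
          - (∑ k ∈ ({i, j} : Finset (Fin n)), (a : Fin n → ℤ) k * (b : Fin n → ℤ) k) = _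
        rw [Finset.sum_pair h, Finset.sum_pair h, Finset.sum_pair h]
        ring
    rw [Finset.sum_congr rfl (fun j _ => step j), Finset.sum_sub_distrib,
      Finset.sum_add_distrib, ← Finset.mul_sum, ← Finset.sum_mul, ha, hb,
      Finset.sum_ite_eq Finset.univ i]
    simp
  have h2 := congrArg (fun (L : Sym2Q (rootLat n) →ₗ[ℤ] (Fin n → ℤ)) => L s) key
  simp only [LinearMap.add_apply, LinearMap.comp_apply, LinearMap.fst_apply,
    LinearMap.snd_apply, LinearMap.smul_apply, LinearMap.zero_apply] at h2
  exact h2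

lemma fvA_apply_ne {n : ℕ} {x t : Fin n} (hx : x ≠ t) (i : Fin n) :
    (fvA n i t : Fin n → ℤ) x = if x = i then 1 else 0 := by
  simp [fvA_coe, chiF, hx]

lemma indicator_step {α β : Type} [DecidableEq α] (x y p1 p2 : α) (hxy : x ≠ y) (cp : ℤ) :
    cp * (((if x = p1 then (1:ℤ) else 0) + (if y = p1 then 1 else 0))
        * ((if x = p2 then (1:ℤ) else 0) + (if y = p2 then 1 else 0))
      - ((if x = p1 then (1:ℤ) else 0) * (if x = p2 then 1 else 0)
        + (if y = p1 then (1:ℤ) else 0) * (if y = p2 then 1 else 0)))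
    = (if (x, y) = (p1, p2) then cp else 0) + (if (y, x) = (p1, p2) then cp else 0) := by
  by_cases h1 : x = p1 <;> by_cases h2 : y = p1 <;>
    by_cases h3 : x = p2 <;> by_cases h4 : y = p2 <;>
    first
      | exact absurd (h1.trans h2.symm) hxy
      | exact absurd (h3.trans h4.symm) hxy
      | (subst_vars; simp_all [Prod.ext_iff]; try ring)

lemma Phi_inj {n m : ℕ} (hm : n = 2 * m + 1) :
    Function.Injective (PhiL n m) := by
  have hnZ : (n : ℤ) = 2 * m + 1 := by exact_mod_cast congrArg (Nat.cast (R := ℤ)) hm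
  rw [injective_iff_map_eq_zero]
  rintro ⟨s, u, z⟩ h
  rw [PhiL_apply] at h
  rw [Prod.ext_iff] at h
  obtain ⟨hW0, h23⟩ := h
  rw [Prod.ext_iff] at h23
  obtain ⟨hU0, hZ0⟩ := h23
  have e1 : ∀ q : P2 (Fin n), (SqL n s).1 q + ∑ i ∈ q.1, u i = 0 := fun q => congrFun hW0 q
  have e2 : ∀ i, (SqL n s).2 i + (1 - (m:ℤ)) * u i + z = 0 := fun i => congrFun hU0 i
  have e3 : (∑ i, u i) + 2 * z = 0 := hZ0
  -- u = 0
  have hu : u = 0 := by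
    funext i
    show u i = (0 : Fin n → ℤ) i
    rw [Pi.zero_apply]
    have hmu := congrFun (mu_rel s) i
    simp only [Pi.add_apply, Pi.smul_apply, smul_eq_mul, Pi.zero_apply] at hmu
    have hmuW : muW n ((SqL n s).1) i
        = ∑ j, if h : i = j then 0
            else (SqL n s).1 ⟨{i, j}, Finset.card_pair h⟩ := rfl
    have step : ∀ j, (if h : i = j then 0
        else (SqL n s).1 ⟨{i, j}, Finset.card_pair h⟩)
        = -(u i + u j) + (if i = j then 2 * u i else 0) := by
      intro j
      by_cases h : i = j
      · subst h; simp; ring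
      · rw [dif_neg h, if_neg h]
        have := e1 ⟨{i, j}, Finset.card_pair h⟩
        have hq : ∑ k ∈ ({i, j} : Finset (Fin n)), u k = u i + u j :=
          Finset.sum_pair h
        rw [hq] at this
        linarith
    rw [hmuW, Finset.sum_congr rfl (fun j _ => step j), Finset.sum_add_distrib,
      Finset.sum_ite_eq Finset.univ i, Finset.sum_neg_distrib, Finset.sum_add_distrib,
      Finset.sum_const, Finset.card_univ, Fintype.card_fin, nsmul_eq_mul] at hmu
    simp only [Finset.mem_univ, if_true] at hmu
    have h2i := e2 i
    have hcomb : ((n:ℤ) - 2 * m) * u i = 0 := by nlinarith [hmu, h2i, e3]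
    have hone : ((n:ℤ) - 2 * m) = 1 := by omega
    rw [hone, one_mul] at hcomb
    exact hcomb
  have hz : z = 0 := by
    rw [hu] at e3
    simp at e3
    linarith
  have hSW : ∀ q : P2 (Fin n), (SqL n s).1 q = 0 := by
    intro q
    have := e1 q
    rw [hu] at this
    simpa using this
  have hSU : ∀ i, (SqL n s).2 i = 0 := by
    intro i
    have := e2 i
    rw [hu, hz] at this
    simpa using this
  have hs : s = 0 := by
    have hpos : 0 < n := by omega
    set t : Fin n := ⟨0, hpos⟩ with ht
    obtain ⟨c, hc⟩ := sym2_span t s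
    have hSqL : SqL n s = ∑ p : Fin n × Fin n,
        c p • Sfun (fvA n p.1 t : Fin n → ℤ) (fvA n p.2 t : Fin n → ℤ) := by
      rw [← hc, map_sum]
      simp only [map_smul, SqL_mkT]
    -- E2 : diagonal coefficients vanish
    have E2 : ∀ x : Fin n, x ≠ t → c (x, x) = 0 := by
      intro x hx
      have := hSU x
      rw [hSqL] at this
      rw [Prod.snd_sum, Finset.sum_apply] at this
      have step : ∀ p : Fin n × Fin n,
          (c p • Sfun (fvA n p.1 t : Fin n → ℤ) (fvA n p.2 t : Fin n → ℤ)).2 x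
          = if (x, x) = p then c p else 0 := by
        intro p
        show c p * ((fvA n p.1 t : Fin n → ℤ) x * (fvA n p.2 t : Fin n → ℤ) x) = _
        rw [fvA_apply_ne hx, fvA_apply_ne hx]
        obtain ⟨p1, p2⟩ := p
        simp only
        by_cases h1 : x = p1 <;> by_cases h2 : x = p2 <;>
          simp [h1, h2, Prod.ext_iff]
      rw [Finset.sum_congr rfl (fun p _ => step p),
        Finset.sum_ite_eq Finset.univ (x, x) c] at this
      simpa using this
    -- E1 : off-diagonal symmetric sums vanish
    have E1 : ∀ x y : Fin n, x ≠ y → x ≠ t → y ≠ t → c (x, y) + c (y, x) = 0 := by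
      intro x y hxy hx hy
      have := hSW ⟨{x, y}, Finset.card_pair hxy⟩
      rw [hSqL] at this
      rw [Prod.fst_sum] at this
      replace this := (Finset.sum_apply (a := (⟨{x, y}, Finset.card_pair hxy⟩ : P2 (Fin n))) Finset.univ
        (fun p : Fin n × Fin n => (c p • Sfun (fvA n p.1 t : Fin n → ℤ) (fvA n p.2 t : Fin n → ℤ)).1)).symm.trans this
      have step : ∀ p : Fin n × Fin n,
          (c p • Sfun (fvA n p.1 t : Fin n → ℤ) (fvA n p.2 t : Fin n → ℤ)).1
            ⟨{x, y}, Finset.card_pair hxy⟩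
          = (if (x, y) = p then c p else 0) + (if (y, x) = p then c p else 0) := by
        intro p
        show c p * SWf (fvA n p.1 t : Fin n → ℤ) (fvA n p.2 t : Fin n → ℤ)
            ⟨{x, y}, Finset.card_pair hxy⟩ = _
        have hSWf : SWf (fvA n p.1 t : Fin n → ℤ) (fvA n p.2 t : Fin n → ℤ)
            ⟨{x, y}, Finset.card_pair hxy⟩
            = ((fvA n p.1 t : Fin n → ℤ) x + (fvA n p.1 t : Fin n → ℤ) y)
              * ((fvA n p.2 t : Fin n → ℤ) x + (fvA n p.2 t : Fin n → ℤ) y)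
              - ((fvA n p.1 t : Fin n → ℤ) x * (fvA n p.2 t : Fin n → ℤ) x
                + (fvA n p.1 t : Fin n → ℤ) y * (fvA n p.2 t : Fin n → ℤ) y) := by
          show (∑ k ∈ ({x, y} : Finset (Fin n)), _) * (∑ k ∈ ({x, y} : Finset (Fin n)), _)
              - (∑ k ∈ ({x, y} : Finset (Fin n)), _) = _
          rw [Finset.sum_pair hxy, Finset.sum_pair hxy, Finset.sum_pair hxy]
        rw [hSWf, fvA_apply_ne hx, fvA_apply_ne hx, fvA_apply_ne hy, fvA_apply_ne hy]
        obtain ⟨p1, p2⟩ := p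
        exact indicator_step (β := Unit) x y p1 p2 hxy (c (p1, p2))
      replace this := (Finset.sum_congr rfl (fun p _ => step p)).symm.trans this
      rw [Finset.sum_add_distrib,
        Finset.sum_ite_eq Finset.univ (x, y) c,
        Finset.sum_ite_eq Finset.univ (y, x) c] at this
      simpa using this
    -- conclude s = 0
    rw [← hc]
    rw [← Finset.sum_filter_add_sum_filter_not Finset.univ
      (fun p : Fin n × Fin n => p.1 ≠ p.2 ∧ p.1 ≠ t ∧ p.2 ≠ t)]
    have hnot : ∑ p ∈ Finset.univ.filter
        (fun p : Fin n × Fin n => ¬(p.1 ≠ p.2 ∧ p.1 ≠ t ∧ p.2 ≠ t)),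
        c p • mkT (fvA n p.1 t) (fvA n p.2 t) = 0 := by
      refine Finset.sum_eq_zero (fun p hp => ?_)
      rw [Finset.mem_filter] at hp
      push_neg at hp
      by_cases h1 : p.1 = t
      · rw [h1, fvA_self, mkT_zero_left, smul_zero]
      · by_cases h2 : p.2 = t
        · rw [h2, fvA_self, mkT_zero_right, smul_zero]
        · have h12 : p.1 = p.2 := by
            by_contra hcon
            exact h2 (hp.2 hcon h1)
          have : c p = 0 := by
            have := E2 p.1 h1
            have hP : p = (p.1, p.1) := by
              rw [Prod.ext_iff]
              exact ⟨rfl, h12.symm⟩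
            rw [hP]
            exact this
          rw [this, zero_smul]
    have hyes : ∑ p ∈ Finset.univ.filter
        (fun p : Fin n × Fin n => p.1 ≠ p.2 ∧ p.1 ≠ t ∧ p.2 ≠ t),
        c p • mkT (fvA n p.1 t) (fvA n p.2 t) = 0 := by
      refine Finset.sum_involution (fun p _ => p.swap) ?_ ?_ ?_ ?_
      · intro p hp
        rw [Finset.mem_filter] at hp
        obtain ⟨-, h12, h1, h2⟩ := hp
        have hswap : mkT (fvA n p.2 t) (fvA n p.1 t) = mkT (fvA n p.1 t) (fvA n p.2 t) :=
          mkT_comm _ _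
        show c p • mkT (fvA n p.1 t) (fvA n p.2 t)
            + c p.swap • mkT (fvA n p.swap.1 t) (fvA n p.swap.2 t) = 0
        have : p.swap.1 = p.2 := rfl
        have : p.swap.2 = p.1 := rfl
        show c p • mkT (fvA n p.1 t) (fvA n p.2 t)
            + c (p.2, p.1) • mkT (fvA n p.2 t) (fvA n p.1 t) = 0
        rw [hswap, ← add_smul]
        have hE := E1 p.1 p.2 h12 h1 h2
        have hcc : c (p.1, p.2) + c (p.2, p.1) = 0 := hE
        have hpp : c p = c (p.1, p.2) := rfl
        rw [hpp, hcc, zero_smul]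
      · intro p hp hne
        rw [Finset.mem_filter] at hp
        intro hcon
        have h21 : p.2 = p.1 := congrArg Prod.fst hcon
        exact hp.2.1 h21.symm
      · intro p hp
        rw [Finset.mem_filter] at hp ⊢
        obtain ⟨-, h12, h1, h2⟩ := hp
        exact ⟨Finset.mem_univ _, fun h => h12 h.symm, h2, h1⟩
      · intro p hp
        rfl
    rw [hnot, hyes, add_zero]
  refine Prod.ext hs (Prod.ext hu hz)


lemma sum_P2_smul {n : ℕ} (g : Equiv.Perm (Fin n)) (q : P2 (Fin n)) (f : Fin n → ℤ) :
    ∑ i ∈ ((g⁻¹ • q : P2 (Fin n))).1, f i = ∑ i ∈ q.1, f (g⁻¹ • i) := by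
  rw [p2_smul_def]
  exact Finset.sum_image (fun a _ b _ h => MulAction.injective (g⁻¹ : Equiv.Perm (Fin n)) h)

lemma SWf_equiv {n : ℕ} (g : Equiv.Perm (Fin n)) (a b : Fin n → ℤ) (q : P2 (Fin n)) :
    SWf (g • a) (g • b) q = SWf a b (g⁻¹ • q) := by
  rw [SWf, SWf, sum_P2_smul g q a, sum_P2_smul g q b,
    sum_P2_smul g q (fun i => a i * b i)]
  rfl

lemma SqL_equiv {n : ℕ} (g : Equiv.Perm (Fin n)) (s : Sym2Q (rootLat n)) :
    SqL n (g • s) = (g • (SqL n s).1, g • (SqL n s).2) := by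
  set actS : Sym2Q (rootLat n) →ₗ[ℤ] Sym2Q (rootLat n) :=
    Submodule.mapQ _ _ (TensorProduct.map (gLin (Equiv.Perm (Fin n)) (rootLat n) g)
      (gLin (Equiv.Perm (Fin n)) (rootLat n) g))
      (symSpan_le_comap (Equiv.Perm (Fin n)) (rootLat n) g) with hactS
  set actW : (P2 (Fin n) → ℤ) →ₗ[ℤ] (P2 (Fin n) → ℤ) :=
    (DistribMulAction.toAddMonoidHom (P2 (Fin n) → ℤ) g).toIntLinearMap with hactW
  set actU : (Fin n → ℤ) →ₗ[ℤ] (Fin n → ℤ) :=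
    (DistribMulAction.toAddMonoidHom (Fin n → ℤ) g).toIntLinearMap with hactU
  have key : (SqL n).comp actS = (LinearMap.prodMap actW actU).comp (SqL n) := by
    apply Submodule.linearMap_qext
    apply TensorProduct.ext'
    intro a b
    show SqL n (actS (Submodule.Quotient.mk (a ⊗ₜ[ℤ] b)))
        = LinearMap.prodMap actW actU (SqL n (Submodule.Quotient.mk (a ⊗ₜ[ℤ] b)))
    have h1 : actS (Submodule.Quotient.mk (a ⊗ₜ[ℤ] b)) = mkT (g • a) (g • b) := by
      rw [hactS]
      rw [Submodule.mapQ_apply, TensorProduct.map_tmul]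
      rfl
    rw [h1]
    have h2 : (Submodule.Quotient.mk (a ⊗ₜ[ℤ] b) : Sym2Q (rootLat n)) = mkT a b := rfl
    rw [h2, SqL_mkT, SqL_mkT]
    refine Prod.ext ?_ (funext fun i => ?_)
    · show SWf ((g • a : rootLat n) : Fin n → ℤ) ((g • b : rootLat n) : Fin n → ℤ)
          = g • SWf (a : Fin n → ℤ) (b : Fin n → ℤ)
      funext q
      rw [augKer_smul_def, augKer_smul_def, SWf_equiv]
      rfl
    · rfl
  have happ := congrArg (fun (L : Sym2Q (rootLat n) →ₗ[ℤ]
      ((P2 (Fin n) → ℤ) × (Fin n → ℤ))) => L s) key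
  simp only [LinearMap.comp_apply] at happ
  have hgs : g • s = actS s := rfl
  rw [hgs, happ]
  rfl

lemma Phi_equiv {n m : ℕ} (g : Equiv.Perm (Fin n)) (s : Sym2Q (rootLat n))
    (u : Fin n → ℤ) (z : ℤ) :
    PhiL n m (g • s, g • u, z)
      = (g • (PhiL n m (s, u, z)).1, g • (PhiL n m (s, u, z)).2.1,
         (PhiL n m (s, u, z)).2.2) := by
  rw [PhiL_apply, PhiL_apply]
  have hSq := SqL_equiv g s
  refine Prod.ext (funext fun q => ?_) (Prod.ext (funext fun i => ?_) ?_)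
  · show (SqL n (g • s)).1 q + ∑ i ∈ q.1, (g • u) i
        = (g • fun q' => (SqL n s).1 q' + ∑ i ∈ q'.1, u i) q
    rw [hSq]
    show (SqL n s).1 (g⁻¹ • q) + ∑ i ∈ q.1, u (g⁻¹ • i)
        = (SqL n s).1 (g⁻¹ • q) + ∑ i ∈ (g⁻¹ • q : P2 (Fin n)).1, u i
    rw [sum_P2_smul g q u]
  · show (SqL n (g • s)).2 i + (1 - (m : ℤ)) * (g • u) i + z
        = (g • fun i' => (SqL n s).2 i' + (1 - (m : ℤ)) * u i' + z) i
    rw [hSq]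
    rfl
  · show (∑ i, (g • u) i) + 2 * z = (∑ i, u i) + 2 * z
    congr 1
    show (∑ i, u (g⁻¹ • i)) = ∑ i, u i
    exact Equiv.sum_comp (g⁻¹ : Equiv.Perm (Fin n)) u

end Aux

theorem stmt_11 (n : ℕ) (hn : Odd n) :
    ∃ e : (Sym2Q (rootLat n) × (Fin n → ℤ) × ℤ) ≃+ ((P2 (Fin n) → ℤ) × (Fin n → ℤ) × ℤ),
      ∀ (g : Equiv.Perm (Fin n)) (s : Sym2Q (rootLat n)) (u : Fin n → ℤ) (z : ℤ),
        e (g • s, g • u, z) =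
          (g • (e (s, u, z)).1, g • (e (s, u, z)).2.1, (e (s, u, z)).2.2) := by
  obtain ⟨m, hm0⟩ := hn
  have hm : n = 2 * m + 1 := by omega
  refine ⟨(LinearEquiv.ofBijective (PhiL n m) ⟨Phi_inj hm, Phi_surj hm⟩).toAddEquiv, ?_⟩
  intro g s u z
  show PhiL n m (g • s, g • u, z) = _
  rw [Phi_equiv]
  rfl
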